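/- For all λ > 0, μ > 0, all 0 < s < t, and all integers 0 ≤ k ≤ n, the conditional probability of the iterated Poisson process satisfies p_k(s) p_{n-k}(t-s) / p_n(t) = C(n,k) · B_k(λ e^{-μ} s) B_{n-k}(λ e^{-μ}(t-s)) / B_n(λ e^{-μ} t), where C(n,k) is the binomial coefficient (note that B_n(λ e^{-μ} t) > 0). -/

import Mathlib

open scoped BigOperators
open Filter MeasureTheory

/-- Bell polynomial: `B n x = e^{-x} * Σ_{k=0}^∞ k^n x^k / k!` (n-th moment of Poisson(x)). -/
noncomputable def bell (n : ℕ) (x : ℝ) : ℝ :=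
  Real.exp (-x) * ∑' k : ℕ, (k : ℝ) ^ n * x ^ k / (Nat.factorial k : ℝ)

/-- pmf of the iterated Poisson process:
`p_m(t) = e^{-λt(1-e^{-μ})} (μ^m/m!) B_m(λ t e^{-μ})`. -/
noncomputable def iterP (lam mu t : ℝ) (m : ℕ) : ℝ :=
  Real.exp (-lam * t * (1 - Real.exp (-mu))) * (mu ^ m / (Nat.factorial m : ℝ)) *
    bell m (lam * t * Real.exp (-mu))

lemma bell_summable (n : ℕ) (x : ℝ) (hx : 0 ≤ x) :
    Summable (fun k : ℕ => (k : ℝ) ^ n * x ^ k / (Nat.factorial k : ℝ)) := by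
  refine Summable.of_nonneg_of_le (fun k => by positivity) (fun k => ?_)
    (((Real.summable_pow_div_factorial (Real.exp 1 * x))).mul_left (Nat.factorial n : ℝ))
  ·
    have h1 : (k : ℝ) ^ n ≤ (Nat.factorial n : ℝ) * Real.exp k := by
      have := Real.pow_div_factorial_le_exp (x := (k : ℝ)) (Nat.cast_nonneg k) n
      have hn : (0:ℝ) < Nat.factorial n := by positivity
      rw [div_le_iff₀ hn] at this
      linarith [this]
    have hek : Real.exp (k : ℝ) = Real.exp 1 ^ k := by
      rw [← Real.exp_nat_mul]; ring_nf
    calc (k : ℝ) ^ n * x ^ k / (Nat.factorial k : ℝ)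
        ≤ (Nat.factorial n : ℝ) * Real.exp k * x ^ k / (Nat.factorial k : ℝ) := by
          apply div_le_div_of_nonneg_right ?_ (by positivity)
          exact mul_le_mul_of_nonneg_right h1 (by positivity)
      _ = (Nat.factorial n : ℝ) * ((Real.exp 1 * x) ^ k / (Nat.factorial k : ℝ)) := by
          rw [hek, mul_pow]; ring

lemma bell_pos (n : ℕ) (x : ℝ) (hx : 0 < x) : 0 < bell n x := by
  unfold bell
  apply mul_pos (Real.exp_pos _)
  have := Summable.tsum_pos (bell_summable n x hx.le) (fun k => by positivity) 1
    (by simp [hx])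
  exact this

theorem stmt8 (lam mu : ℝ) (hlam : 0 < lam) (hmu : 0 < mu)
    (s t : ℝ) (hs : 0 < s) (hst : s < t) (n k : ℕ) (hk : k ≤ n) :
    0 < bell n (lam * Real.exp (-mu) * t) ∧
    iterP lam mu s k * iterP lam mu (t - s) (n - k) / iterP lam mu t n
      = (Nat.choose n k : ℝ) *
          (bell k (lam * Real.exp (-mu) * s) * bell (n - k) (lam * Real.exp (-mu) * (t - s)))
          / bell n (lam * Real.exp (-mu) * t) := by
  have ht : 0 < t := hs.trans hst
  have hts : 0 < t - s := by linarith
  have hE : 0 < Real.exp (-mu) := Real.exp_pos _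
  have hBn : 0 < bell n (lam * Real.exp (-mu) * t) := bell_pos _ _ (by positivity)
  refine ⟨hBn, ?_⟩
  have e1 : lam * s * Real.exp (-mu) = lam * Real.exp (-mu) * s := by ring
  have e2 : lam * (t - s) * Real.exp (-mu) = lam * Real.exp (-mu) * (t - s) := by ring
  have e3 : lam * t * Real.exp (-mu) = lam * Real.exp (-mu) * t := by ring
  unfold iterP
  rw [e1, e2, e3]
  have hexp : Real.exp (-(lam * s * (1 - Real.exp (-mu)))) *
      Real.exp (-(lam * (t - s) * (1 - Real.exp (-mu)))) =
      Real.exp (-(lam * t * (1 - Real.exp (-mu)))) := by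
    rw [← Real.exp_add]; ring_nf
  have hchoose : (Nat.choose n k : ℝ) * (Nat.factorial k : ℝ) * (Nat.factorial (n - k) : ℝ)
      = (Nat.factorial n : ℝ) := by
    exact_mod_cast congrArg (Nat.cast : ℕ → ℝ)
      (Nat.choose_mul_factorial_mul_factorial hk)
  have hmun : mu ^ k * mu ^ (n - k) = mu ^ n := by
    rw [← pow_add, Nat.add_sub_cancel' hk]
  have hBnne : bell n (lam * Real.exp (-mu) * t) ≠ 0 := hBn.ne'
  have hEne : Real.exp (-lam * t * (1 - Real.exp (-mu))) ≠ 0 := (Real.exp_pos _).ne'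
  have hfk : (Nat.factorial k : ℝ) ≠ 0 := by positivity
  have hfnk : (Nat.factorial (n - k) : ℝ) ≠ 0 := by positivity
  have hfn : (Nat.factorial n : ℝ) ≠ 0 := by positivity
  field_simp
  rw [show Real.exp (-(lam * (1 - Real.exp (-mu)) * t)) = Real.exp (-(lam * s * (1 - Real.exp (-mu)))) * Real.exp (-(lam * (1 - Real.exp (-mu)) * (t - s))) by rw [← Real.exp_add]; congr 1; ring, ← hchoose, ← hmun]
  ring
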